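/- For the vector a = (0, 0, 0) ∈ ℤ³ the tropical entropy equals H(a) = 1/3 = 1 − 2/(n+1) with n = 2; hence the upper bound H ≤ 1 − 2/(n+1) is attained. -/

import Mathlib

open Filter Topology

/-- The minimum of `z (j + i) + a i` over `0 ≤ i ≤ n` is attained for at least two
distinct indices `i₁ ≠ i₂`. -/
def TropWindow (n : ℕ) (a : ℕ → ℤ) (z : ℕ → ℝ) (j : ℕ) : Prop :=
  ∃ i₁ i₂ : ℕ, i₁ ≤ n ∧ i₂ ≤ n ∧ i₁ ≠ i₂ ∧
    (∀ i ≤ n, z (j + i₁) + (a i₁ : ℝ) ≤ z (j + i) + (a i : ℝ)) ∧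
    (∀ i ≤ n, z (j + i₂) + (a i₂ : ℝ) ≤ z (j + i) + (a i : ℝ))

/-- `D(s) ⊆ ℝ^s`: the set of finite sequences `(y_0, …, y_{s-1})` satisfying the
vector `a = (a_0, …, a_n)`, i.e. for every window `j` with `j + n < s` the minimum
`min_{0 ≤ i ≤ n} (y_{j+i} + a_i)` is attained at least twice. -/
def tropD (n : ℕ) (a : ℕ → ℤ) (s : ℕ) : Set (Fin s → ℝ) :=
  {y | ∀ j : ℕ, j + n < s →
    TropWindow n a (fun k => if h : k < s then y ⟨k, h⟩ else 0) j}

/-- The tropical Hilbert function `d(s) := dim D(s)` (the Hausdorff dimension of the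
finite union of polyhedra `D(s)`). -/
noncomputable def tropHilbert (n : ℕ) (a : ℕ → ℤ) (s : ℕ) : ℝ :=
  (dimH (tropD n a s)).toReal

open ENNReal in
/-- Auxiliary: the trichotomy satisfied by each window for `a = 0`, `n = 2`. -/
abbrev Tri (z : ℕ → ℝ) (j : ℕ) : Prop :=
  (z j = z (j+1) ∧ z j ≤ z (j+2)) ∨ (z j = z (j+2) ∧ z j ≤ z (j+1)) ∨
    (z (j+1) = z (j+2) ∧ z (j+1) ≤ z j)


lemma window_cases {z : ℕ → ℝ} {j : ℕ} (h : TropWindow 2 (fun _ => 0) z j) :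
    (z j = z (j+1) ∧ z j ≤ z (j+2)) ∨ (z j = z (j+2) ∧ z j ≤ z (j+1)) ∨
    (z (j+1) = z (j+2) ∧ z (j+1) ≤ z j) := by
  obtain ⟨i₁, i₂, h₁, h₂, hne, m₁, m₂⟩ := h
  simp only [Int.cast_zero, add_zero] at m₁ m₂
  have e0 := m₁ 0 (by norm_num); have e1 := m₁ 1 (by norm_num); have e2 := m₁ 2 (by norm_num)
  have f0 := m₂ 0 (by norm_num); have f1 := m₂ 1 (by norm_num); have f2 := m₂ 2 (by norm_num)
  clear m₁ m₂
  simp only [Nat.add_zero] at e0 e1 e2 f0 f1 f2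
  interval_cases i₁ <;> interval_cases i₂ <;>
    (try simp only [Nat.add_zero] at e0 e1 e2 f0 f1 f2) <;>
    first
      | exact absurd rfl hne
      | exact Or.inl ⟨by linarith, by linarith⟩
      | exact Or.inr (Or.inl ⟨by linarith, by linarith⟩)
      | exact Or.inr (Or.inr ⟨by linarith, by linarith⟩)

lemma key_lemma {s : ℕ} {z : ℕ → ℝ} (W : ∀ j, j + 2 < s → Tri z j) :
    ∀ j, j + 2 < s → (∀ k, j < k → k < s → z k ≠ z j) →
      z (j+1) = z (j+2) ∧ z (j+1) < z j := by
  intro j hj hnew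
  rcases W j hj with ⟨h1, h2⟩ | ⟨h1, h2⟩ | ⟨h1, h2⟩
  · exact absurd h1.symm (hnew (j+1) (by omega) (by omega))
  · exact absurd h1.symm (hnew (j+2) (by omega) (by omega))
  · exact ⟨h1, lt_of_le_of_ne h2 (hnew (j+1) (by omega) (by omega))⟩

lemma spacing {s : ℕ} {z : ℕ → ℝ} (W : ∀ j, j + 2 < s → Tri z j) :
    ∀ j' j, j' < j → j + 2 < s →
      (∀ k, j < k → k < s → z k ≠ z j) → (∀ k, j' < k → k < s → z k ≠ z j') →
      j' + 3 ≤ j := by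
  intro j' j hlt hj hnj hnj'
  by_contra hc
  obtain ⟨h1, h2⟩ := key_lemma W j hj hnj
  have hcase : j = j' + 1 ∨ j = j' + 2 := by omega
  rcases hcase with rfl | rfl
  · rcases W j' (by omega) with ⟨g1, g2⟩ | ⟨g1, g2⟩ | ⟨g1, g2⟩
    · exact hnj' (j'+1) (by omega) (by omega) g1.symm
    · exact hnj' (j'+2) (by omega) (by omega) g1.symm
    · rw [show j' + 1 + 1 = j' + 2 from by omega] at h2
      linarith
  · -- j = j' + 2; first show z (j'+1) = z (j'+3)
    have hw : Tri z (j'+1) := W (j'+1) (by omega)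
    simp only [Tri, show j' + 1 + 1 = j' + 2 from by omega,
      show j' + 1 + 2 = j' + 3 from by omega] at hw
    simp only [show j' + 2 + 1 = j' + 3 from by omega, show j' + 2 + 2 = j' + 4 from by omega] at h1 h2
    have g13 : z (j'+1) = z (j'+3) := by
      rcases hw with ⟨g1, g2⟩ | ⟨g1, g2⟩ | ⟨g1, g2⟩
      · linarith
      · exact g1
      · linarith
    rcases W j' (by omega) with ⟨g1, g2⟩ | ⟨g1, g2⟩ | ⟨g1, g2⟩
    · exact hnj' (j'+1) (by omega) (by omega) g1.symm
    · exact hnj' (j'+2) (by omega) (by omega) g1.symm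
    · rw [show j' + 1 + 1 = j' + 2 from by omega] at g1
      linarith [g13, h2, g1]

lemma card_bound {s : ℕ} {z : ℕ → ℝ} (W : ∀ j, j + 2 < s → Tri z j) :
    ((Finset.range s).image z).card ≤ s / 3 + 2 := by
  classical
  set T : Finset ℕ := (Finset.range s).filter
    (fun j => ∀ k, j < k → k < s → z k ≠ z j) with hT
  have hTmem : ∀ j ∈ T, j < s ∧ ∀ k, j < k → k < s → z k ≠ z j := by
    intro j hj
    rw [hT, Finset.mem_filter, Finset.mem_range] at hj
    exact hj
  -- each value of the image has a last occurrence, which lies in T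
  have hcard1 : ((Finset.range s).image z).card ≤ T.card := by
    set f : ℝ → ℕ := fun v =>
      if h : ((Finset.range s).filter (fun j => z j = v)).Nonempty then
        ((Finset.range s).filter (fun j => z j = v)).max' h else 0 with hf
    have hfv : ∀ v ∈ (Finset.range s).image z, z (f v) = v ∧ f v ∈ T := by
      intro v hv
      rw [Finset.mem_image] at hv
      obtain ⟨i, hi, hzi⟩ := hv
      have hne : ((Finset.range s).filter (fun j => z j = v)).Nonempty :=
        ⟨i, Finset.mem_filter.2 ⟨hi, hzi⟩⟩
      have hfeq : f v = ((Finset.range s).filter (fun j => z j = v)).max' hne := by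
        rw [hf]; exact dif_pos hne
      have hmem := ((Finset.range s).filter (fun j => z j = v)).max'_mem hne
      rw [← hfeq] at hmem
      rw [Finset.mem_filter, Finset.mem_range] at hmem
      refine ⟨hmem.2, ?_⟩
      rw [hT, Finset.mem_filter, Finset.mem_range]
      refine ⟨hmem.1, fun k hk hks hzk => ?_⟩
      have : k ∈ (Finset.range s).filter (fun j => z j = v) :=
        Finset.mem_filter.2 ⟨Finset.mem_range.2 hks, by rw [hzk, hmem.2]⟩
      have := Finset.le_max' _ k this
      rw [← hfeq] at this
      omega
    apply Finset.card_le_card_of_injOn f (fun v hv => (hfv v hv).2)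
    intro v hv v' hv' heq
    rw [← (hfv v hv).1, ← (hfv v' hv').1, heq]
  -- now bound T.card
  set T₁ := T.filter (fun j => j + 2 < s) with hT1
  set T₂ := T.filter (fun j => ¬ j + 2 < s) with hT2
  have hsplit : T₁.card + T₂.card = T.card :=
    Finset.card_filter_add_card_filter_not (fun j => j + 2 < s)
  have hc2 : T₂.card ≤ 2 := by
    have hsub : T₂ ⊆ Finset.Ico (s - 2) s := by
      intro j hj
      rw [hT2, Finset.mem_filter] at hj
      have := hTmem j hj.1
      rw [Finset.mem_Ico]
      omega
    calc T₂.card ≤ (Finset.Ico (s - 2) s).card := Finset.card_le_card hsub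
    _ ≤ 2 := by rw [Nat.card_Ico]; omega
  have hc1 : T₁.card ≤ s / 3 := by
    rw [← Finset.card_range (s / 3)]
    apply Finset.card_le_card_of_injOn (fun j => j / 3)
    · intro j hj
      rw [hT1, Finset.mem_coe, Finset.mem_filter] at hj
      simp only [Finset.mem_coe, Finset.mem_range]
      omega
    · intro j hj j' hj' heq
      have hjm := Finset.mem_filter.1 (Finset.mem_coe.1 hj)
      have hjm' := Finset.mem_filter.1 (Finset.mem_coe.1 hj')
      by_contra hne
      rcases lt_or_gt_of_ne hne with h | h
      · have := spacing W j j' h hjm'.2 (hTmem j' hjm'.1).2 (hTmem j hjm.1).2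
        simp only at heq
        omega
      · have := spacing W j' j h hjm.2 (hTmem j hjm.1).2 (hTmem j' hjm'.1).2
        simp only at heq
        omega
  omega

open ENNReal in
-- LOWER BOUND
lemma tropD_lower (s : ℕ) :
    ((s / 3 : ℕ) : ℝ≥0∞) ≤ dimH (tropD 2 (fun _ => 0) s) := by
  classical
  set m := s / 3 with hm
  set φ : (Fin m → ℝ) → (Fin s → ℝ) := fun u i =>
    if h : (i : ℕ) / 3 < m ∧ (i : ℕ) % 3 = 2 then u ⟨(i : ℕ) / 3, h.1⟩ else 0 with hφ
  set U : Set (Fin m → ℝ) := {u | ∀ k, 0 < u k} with hU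
  have hφeval : ∀ (u : Fin m → ℝ) (k : Fin m) (hk : 3 * (k : ℕ) + 2 < s),
      φ u ⟨3 * (k : ℕ) + 2, hk⟩ = u k := by
    intro u k hk
    have h1 : (3 * (k : ℕ) + 2) / 3 = (k : ℕ) := by omega
    have h2 : (3 * (k : ℕ) + 2) % 3 = 2 := by omega
    rw [hφ]
    simp only
    rw [dif_pos (by rw [h1, h2]; exact ⟨k.2, rfl⟩)]
    congr 1
    exact Fin.ext h1
  have hiso : Isometry φ := by
    apply Isometry.of_dist_eq
    intro u v
    apply le_antisymm
    · apply (dist_pi_le_iff dist_nonneg).2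
      intro i
      rw [hφ]
      simp only
      split
      · exact dist_le_pi_dist u v _
      · simp [dist_self]
    · apply (dist_pi_le_iff dist_nonneg).2
      intro k
      have hk : 3 * (k : ℕ) + 2 < s := by have := k.2; omega
      calc dist (u k) (v k) = dist (φ u ⟨3 * (k : ℕ) + 2, hk⟩) (φ v ⟨3 * (k : ℕ) + 2, hk⟩) := by
            rw [hφeval, hφeval]
      _ ≤ dist (φ u) (φ v) := dist_le_pi_dist _ _ _
  have hsub : φ '' U ⊆ tropD 2 (fun _ => 0) s := by
    rintro - ⟨u, hu, rfl⟩
    intro j hj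
    set z : ℕ → ℝ := fun k => if h : k < s then φ u ⟨k, h⟩ else 0 with hz
    have hz0 : ∀ k, 0 ≤ z k := by
      intro k
      rw [hz]; simp only
      split
      · rw [hφ]; simp only
        split
        · exact le_of_lt (hu _)
        · exact le_refl 0
      · exact le_refl 0
    have hzero : ∀ k, k % 3 ≠ 2 → z k = 0 := by
      intro k hk
      rw [hz]; simp only
      split
      · rw [hφ]; simp only; rw [dif_neg (by tauto)]
      · rfl
    have hmod : j % 3 = 0 ∨ j % 3 = 1 ∨ j % 3 = 2 := by omega
    have key : ∀ i₁ i₂ : ℕ, i₁ ≤ 2 → i₂ ≤ 2 → i₁ ≠ i₂ →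
        z (j + i₁) = 0 → z (j + i₂) = 0 → TropWindow 2 (fun _ => 0) z j := by
      intro i₁ i₂ h1 h2 hne e1 e2
      exact ⟨i₁, i₂, h1, h2, hne, by
        intro i hi; simp only [Int.cast_zero, add_zero]; rw [e1]; exact hz0 _, by
        intro i hi; simp only [Int.cast_zero, add_zero]; rw [e2]; exact hz0 _⟩
    rcases hmod with h | h | h
    · exact key 0 1 (by omega) (by omega) (by omega)
        (hzero _ (by omega)) (hzero _ (by omega))
    · exact key 0 2 (by omega) (by omega) (by omega)
        (hzero _ (by omega)) (hzero _ (by omega))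
    · exact key 1 2 (by omega) (by omega) (by omega)
        (hzero _ (by omega)) (hzero _ (by omega))
  calc ((m : ℕ) : ℝ≥0∞) = dimH U := by
        rw [Real.dimH_of_mem_nhds (x := fun _ => (1 : ℝ))]
        · simp [Module.finrank_fintype_fun_eq_card]
        · rw [Metric.mem_nhds_iff]
          refine ⟨1, one_pos, fun u hu => ?_⟩
          intro k
          have h1 := dist_le_pi_dist u (fun _ => (1 : ℝ)) k
          rw [Metric.mem_ball] at hu
          have h2 : dist (u k) 1 < 1 := lt_of_le_of_lt h1 hu
          rw [Real.dist_eq] at h2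
          have := abs_lt.1 h2
          linarith [this.1]
  _ = dimH (φ '' U) := (hiso.dimH_image U).symm
  _ ≤ dimH (tropD 2 (fun _ => 0) s) := dimH_mono hsub

open ENNReal in
lemma tropD_upper (s : ℕ) :
    dimH (tropD 2 (fun _ => 0) s) ≤ ((s / 3 + 2 : ℕ) : ℝ≥0∞) := by
  classical
  set m := s / 3 + 2 with hm
  have hcover : tropD 2 (fun _ => 0) s ⊆
      ⋃ c : Fin s → Fin m, Set.range (fun t : Fin m → ℝ => t ∘ c) := by
    intro y hy
    set z : ℕ → ℝ := fun k => if h : k < s then y ⟨k, h⟩ else 0 with hz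
    have W : ∀ j, j + 2 < s → Tri z j := fun j hj => window_cases (hy j hj)
    have hcard := card_bound W
    set l : List ℝ := ((Finset.range s).image z).toList with hl
    have hlen : l.length ≤ m := by
      rw [hl, Finset.length_toList]; exact hcard
    have hmem : ∀ i : Fin s, z i ∈ l := by
      intro i
      rw [hl, Finset.mem_toList, Finset.mem_image]
      exact ⟨i, Finset.mem_range.2 i.2, rfl⟩
    set c : Fin s → Fin m := fun i =>
      ⟨l.idxOf (z i), lt_of_lt_of_le (List.idxOf_lt_length_iff.2 (hmem i)) hlen⟩ with hc
    set t : Fin m → ℝ := fun k => l.getD k 0 with ht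
    refine Set.mem_iUnion.2 ⟨c, t, ?_⟩
    funext i
    show t (c i) = y i
    rw [ht, hc]
    simp only
    have hidx : l.idxOf (z i.1) < l.length := List.idxOf_lt_length_iff.2 (hmem i)
    rw [List.getD_eq_getElem _ _ hidx]
    have h1 : l.get ⟨l.idxOf (z i.1), hidx⟩ = z i.1 := List.idxOf_get hidx
    simp only [List.get_eq_getElem] at h1
    rw [h1, hz]
    simp only [i.2, dif_pos]
  calc dimH (tropD 2 (fun _ => 0) s)
      ≤ dimH (⋃ c : Fin s → Fin m, Set.range (fun t : Fin m → ℝ => t ∘ c)) := dimH_mono hcover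
  _ = ⨆ c : Fin s → Fin m, dimH (Set.range (fun t : Fin m → ℝ => t ∘ c)) := dimH_iUnion _
  _ ≤ ((m : ℕ) : ℝ≥0∞) := by
      apply iSup_le
      intro c
      have hlip : LipschitzWith 1 (fun t : Fin m → ℝ => t ∘ c) := by
        apply LipschitzWith.of_dist_le_mul
        intro t t'
        rw [NNReal.coe_one, one_mul]
        apply (dist_pi_le_iff dist_nonneg).2
        intro i
        exact dist_le_pi_dist t t' (c i)
      calc dimH (Set.range (fun t : Fin m → ℝ => t ∘ c))
          ≤ dimH (Set.univ : Set (Fin m → ℝ)) := hlip.dimH_range_le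
      _ = m := Real.dimH_univ_pi_fin m

open ENNReal in
lemma tropHilbert_bounds (s : ℕ) :
    ((s / 3 : ℕ) : ℝ) ≤ tropHilbert 2 (fun _ => 0) s ∧
      tropHilbert 2 (fun _ => 0) s ≤ ((s / 3 + 2 : ℕ) : ℝ) := by
  have hl := tropD_lower s
  have hu := tropD_upper s
  have hne : dimH (tropD 2 (fun _ => 0) s) ≠ ⊤ :=
    ne_top_of_le_ne_top (natCast_ne_top _) hu
  constructor
  · have := ENNReal.toReal_mono hne hl
    rwa [ENNReal.toReal_natCast] at this
  · have := ENNReal.toReal_mono (natCast_ne_top _) hu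
    rwa [ENNReal.toReal_natCast] at this

/-- For the vector `a = (0, 0, 0)` (with `n = 2`) the tropical entropy equals
`1/3 = 1 - 2/(n + 1)`: `lim_{s→∞} d(s)/s = 1/3`. Hence the upper bound
`H ≤ 1 - 2/(n + 1)` is attained. -/
theorem tropEntropy_000 :
    Tendsto (fun s : ℕ => tropHilbert 2 (fun _ => 0) s / s) atTop (𝓝 (1 / 3)) := by
  have h1 : Tendsto (fun s : ℕ => 1 / 3 - 1 / (s : ℝ)) atTop (𝓝 (1 / 3)) := by
    have := tendsto_const_nhds (x := (1/3 : ℝ)) (f := atTop (α := ℕ))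
    have h := this.sub tendsto_one_div_atTop_nhds_zero_nat
    simpa using h
  have h2 : Tendsto (fun s : ℕ => 1 / 3 + 2 * (1 / (s : ℝ))) atTop (𝓝 (1 / 3)) := by
    have := tendsto_const_nhds (x := (1/3 : ℝ)) (f := atTop (α := ℕ))
    have h := this.add (tendsto_one_div_atTop_nhds_zero_nat.const_mul 2)
    simpa using h
  apply tendsto_of_tendsto_of_tendsto_of_le_of_le' h1 h2
  · filter_upwards [eventually_ge_atTop 1] with s hs
    have hs0 : (0 : ℝ) < s := by positivity
    have hb := (tropHilbert_bounds s).1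
    have hcast : (s : ℝ) / 3 - 1 ≤ ((s / 3 : ℕ) : ℝ) := by
      have : s ≤ 3 * (s / 3) + 2 := by omega
      have h' : (s : ℝ) ≤ 3 * ((s / 3 : ℕ) : ℝ) + 2 := by exact_mod_cast this
      linarith
    calc 1 / 3 - 1 / (s : ℝ) = ((s : ℝ) / 3 - 1) / s := by field_simp
    _ ≤ ((s / 3 : ℕ) : ℝ) / s := by gcongr
    _ ≤ tropHilbert 2 (fun _ => 0) s / s := by gcongr
  · filter_upwards [eventually_ge_atTop 1] with s hs
    have hs0 : (0 : ℝ) < s := by positivity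
    have hb := (tropHilbert_bounds s).2
    have hcast : ((s / 3 + 2 : ℕ) : ℝ) ≤ (s : ℝ) / 3 + 2 := by
      have : 3 * (s / 3) ≤ s := by omega
      have h' : 3 * ((s / 3 : ℕ) : ℝ) ≤ (s : ℝ) := by exact_mod_cast this
      push_cast
      linarith
    calc tropHilbert 2 (fun _ => 0) s / s ≤ ((s / 3 + 2 : ℕ) : ℝ) / s := by gcongr
    _ ≤ ((s : ℝ) / 3 + 2) / s := by gcongr
    _ = 1 / 3 + 2 * (1 / (s : ℝ)) := by field_simp
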